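/- Let (g, [·,·], δ_g) be a Lie bialgebra with [g,g] = g and Z(g) = 0, of codimension one in a vector space E. Then every flag datum of g has the form (0, D, 0, B) where D is a derivation of g; consequently BExtd(E, g) ≅ TFLB(g, δ_g)/≡, where (0,D,0,B) ≡ (0,D',0,B') if and only if there exist U ∈ g and β ∈ k* with D(a) = [U,a] + βD'(a) for all a, and B = δ_g(U) + βB'. -/

import Mathlib

open TensorProduct LinearMap

noncomputable section

/-- The flip `A ⊗ B → B ⊗ A`. -/
def flipT (k A B : Type*) [Field k] [AddCommGroup A] [Module k A]
    [AddCommGroup B] [Module k B] : A ⊗[k] B →ₗ[k] B ⊗[k] A :=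
  (TensorProduct.comm k A B).toLinearMap

/-- Swap of the first two tensor factors `A ⊗ (B ⊗ C) → B ⊗ (A ⊗ C)`. -/
def swap12 (k A B C : Type*) [Field k] [AddCommGroup A] [Module k A]
    [AddCommGroup B] [Module k B] [AddCommGroup C] [Module k C] :
    A ⊗[k] (B ⊗[k] C) →ₗ[k] B ⊗[k] (A ⊗[k] C) :=
  (TensorProduct.assoc k B A C).toLinearMap ∘ₗ
    rTensor C (flipT k A B) ∘ₗ (TensorProduct.assoc k A B C).symm.toLinearMap

/-- Associator as a linear map. -/
def asr (k A B C : Type*) [Field k] [AddCommGroup A] [Module k A]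
    [AddCommGroup B] [Module k B] [AddCommGroup C] [Module k C] :
    (A ⊗[k] B) ⊗[k] C →ₗ[k] A ⊗[k] (B ⊗[k] C) :=
  (TensorProduct.assoc k A B C).toLinearMap

/-- `δ : M → M ⊗ M` is a Lie coalgebra structure: anti-cocommutativity and co-Jacobi. -/
def IsLieCoalgebra {k M : Type*} [Field k] [AddCommGroup M] [Module k M]
    (δ : M →ₗ[k] M ⊗[k] M) : Prop :=
  (∀ m, flipT k M M (δ m) = - δ m) ∧
  (∀ m, lTensor M δ (δ m) - swap12 k M M M (lTensor M δ (δ m)) =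
      asr k M M M (rTensor M δ (δ m)))

/-- A (bilinear) map `b` is a Lie bracket: alternating and Jacobi (in Leibniz form). -/
def IsLieBracket {k L : Type*} [Field k] [AddCommGroup L] [Module k L]
    (b : L →ₗ[k] L →ₗ[k] L) : Prop :=
  (∀ a, b a a = 0) ∧ (∀ a c d, b a (b c d) = b (b a c) d + b c (b a d))

/-- The adjoint action of `a` on `L ⊗ L`: `a.(Σ b₁⊗b₂) = Σ [a,b₁]⊗b₂ + b₁⊗[a,b₂]`. -/
def adT {k L : Type*} [Field k] [AddCommGroup L] [Module k L]
    (b : L →ₗ[k] L →ₗ[k] L) (a : L) : L ⊗[k] L →ₗ[k] L ⊗[k] L :=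
  rTensor L (b a) + lTensor L (b a)

/-- `(L, b, δ)` is a Lie bialgebra. -/
def IsLieBialgebra {k L : Type*} [Field k] [AddCommGroup L] [Module k L]
    (b : L →ₗ[k] L →ₗ[k] L) (δ : L →ₗ[k] L ⊗[k] L) : Prop :=
  IsLieBracket b ∧ IsLieCoalgebra δ ∧
    ∀ a c, δ (b a c) = adT b a (δ c) - adT b c (δ a)

variable {k g V : Type*} [Field k] [CharZero k]
  [AddCommGroup g] [Module k g] [AddCommGroup V] [Module k V]

/-- The unified co-product map on `E = g ⊕ V`:
`δ_E(a + x) = δ_g(a) + Δ_E(x) − τΔ_E(x) + Δ_V(x) + δ_V(x)`. -/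
def uniCoprod (δg : g →ₗ[k] g ⊗[k] g) (ΔE : V →ₗ[k] g ⊗[k] V)
    (ΔV : V →ₗ[k] g ⊗[k] g) (δV : V →ₗ[k] V ⊗[k] V) :
    (g × V) →ₗ[k] (g × V) ⊗[k] (g × V) :=
  map (inl k g V) (inl k g V) ∘ₗ δg ∘ₗ fst k g V +
    (map (inl k g V) (inr k g V) ∘ₗ ΔE
      - map (inr k g V) (inl k g V) ∘ₗ flipT k g V ∘ₗ ΔE
      + map (inl k g V) (inl k g V) ∘ₗ ΔV
      + map (inr k g V) (inr k g V) ∘ₗ δV) ∘ₗ snd k g V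

/-- Conditions (CLE1)–(CLE5): `(Δ_E, Δ_V, δ_V)` is a Lie coalgebraic extending
structure of `(g, δ_g)` by `V`. -/
def IsCoalgExtStructure (δg : g →ₗ[k] g ⊗[k] g) (ΔE : V →ₗ[k] g ⊗[k] V)
    (ΔV : V →ₗ[k] g ⊗[k] g) (δV : V →ₗ[k] V ⊗[k] V) : Prop :=
  -- (CLE1)
  (∀ x, flipT k g g (ΔV x) = - ΔV x) ∧ (∀ x, flipT k V V (δV x) = - δV x) ∧
  -- (CLE2)
  (∀ x, lTensor g ΔV (ΔE x) + lTensor g δg (ΔV x)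
      - swap12 k g g g (lTensor g ΔV (ΔE x)) - swap12 k g g g (lTensor g δg (ΔV x)) =
      - asr k g g g (rTensor g ΔV (flipT k g V (ΔE x)))
      + asr k g g g (rTensor g δg (ΔV x))) ∧
  -- (CLE3)
  (∀ x, lTensor g ΔE (ΔE x) - swap12 k g g V (lTensor g ΔE (ΔE x)) =
      asr k g g V (rTensor V δg (ΔE x)) + asr k g g V (rTensor V ΔV (δV x))) ∧
  -- (CLE4)
  (∀ x, lTensor g δV (ΔE x) - swap12 k V g V (lTensor V ΔE (δV x)) =
      asr k g V V (rTensor V ΔE (δV x))) ∧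
  -- (CLE5)
  (∀ x, lTensor V δV (δV x) - swap12 k V V V (lTensor V δV (δV x)) =
      asr k V V V (rTensor V δV (δV x)))

end
noncomputable section
variable {k g V : Type*} [Field k] [CharZero k]
  [AddCommGroup g] [Module k g] [AddCommGroup V] [Module k V]

/-- The unified product bracket on `E = g ⊕ V`:
`[a+x, b+y] = [a,b] + x⊳b − y⊳a + f(x,y) + x⊲b − y⊲a + {x,y}`. -/
def uniBracket (gbr : g →ₗ[k] g →ₗ[k] g) (lhd : V →ₗ[k] g →ₗ[k] V)
    (rhd : V →ₗ[k] g →ₗ[k] g) (f : V →ₗ[k] V →ₗ[k] g)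
    (br : V →ₗ[k] V →ₗ[k] V) : (g × V) →ₗ[k] (g × V) →ₗ[k] (g × V) :=
  LinearMap.mk₂ k
    (fun u v => (gbr u.1 v.1 + rhd u.2 v.1 - rhd v.2 u.1 + f u.2 v.2,
                 lhd u.2 v.1 - lhd v.2 u.1 + br u.2 v.2))
    (by intro m₁ m₂ n; simp [Prod.ext_iff]; constructor <;> abel)
    (by intro c m n; simp [Prod.ext_iff, smul_add, smul_sub])
    (by intro m n₁ n₂; simp [Prod.ext_iff]; constructor <;> abel)
    (by intro c m n; simp [Prod.ext_iff, smul_add, smul_sub])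

/-- Conditions (LE1)–(LE7): `(⊲, ⊳, f, {·,·})` is a Lie extending structure
of the Lie algebra `(g, [·,·])` by `V` (Agore–Militaru). -/
def IsLieExtStructure (gbr : g →ₗ[k] g →ₗ[k] g) (lhd : V →ₗ[k] g →ₗ[k] V)
    (rhd : V →ₗ[k] g →ₗ[k] g) (f : V →ₗ[k] V →ₗ[k] g)
    (br : V →ₗ[k] V →ₗ[k] V) : Prop :=
  -- (LE1)
  (∀ x, f x x = 0) ∧ (∀ x, br x x = 0) ∧
  -- (LE2) : (V, ⊲) is a right g-module
  (∀ x a b, lhd x (gbr a b) = lhd (lhd x a) b - lhd (lhd x b) a) ∧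
  -- (LE3)
  (∀ x a b, rhd x (gbr a b) = gbr (rhd x a) b + gbr a (rhd x b)
      + rhd (lhd x a) b - rhd (lhd x b) a) ∧
  -- (LE4)
  (∀ x y a, lhd (br x y) a = br x (lhd y a) + br (lhd x a) y
      + lhd x (rhd y a) - lhd y (rhd x a)) ∧
  -- (LE5)
  (∀ x y a, rhd (br x y) a = rhd x (rhd y a) - rhd y (rhd x a)
      + gbr a (f x y) + f x (lhd y a) + f (lhd x a) y) ∧
  -- (LE6)
  (∀ x y z, f x (br y z) + f y (br z x) + f z (br x y)
      + rhd x (f y z) + rhd y (f z x) + rhd z (f x y) = 0) ∧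
  -- (LE7)
  (∀ x y z, br x (br y z) + br y (br z x) + br z (br x y)
      + lhd x (f y z) + lhd y (f z x) + lhd z (f x y) = 0)

/-- Conditions (BE2)–(BE7): compatibility between the Lie extending structure
and the Lie coalgebraic extending structure. -/
def BEConditions (gbr : g →ₗ[k] g →ₗ[k] g) (δg : g →ₗ[k] g ⊗[k] g)
    (lhd : V →ₗ[k] g →ₗ[k] V) (rhd : V →ₗ[k] g →ₗ[k] g)
    (f : V →ₗ[k] V →ₗ[k] g) (br : V →ₗ[k] V →ₗ[k] V)
    (ΔE : V →ₗ[k] g ⊗[k] V) (ΔV : V →ₗ[k] g ⊗[k] g)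
    (δV : V →ₗ[k] V ⊗[k] V) : Prop :=
  -- (BE2)
  (∀ a x, - ΔV (lhd x a) - δg (rhd x a) =
      flipT k g g (lTensor g (rhd.flip a) (ΔE x)) - lTensor g (rhd.flip a) (ΔE x)
      + adT gbr a (ΔV x)
      - (rTensor g (rhd x) (δg a) + lTensor g (rhd x) (δg a))) ∧
  -- (BE3)
  (∀ a x, ΔE (lhd x a) =
      - rTensor V (gbr a) (ΔE x) + lTensor g (lhd.flip a) (ΔE x)
      + rTensor V (rhd.flip a) (δV x) + lTensor g (lhd x) (δg a)) ∧
  -- (BE4)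
  (∀ a x, δV (lhd x a) =
      lTensor V (lhd.flip a) (δV x) + rTensor V (lhd.flip a) (δV x)) ∧
  -- (BE5)
  (∀ x y, δg (f x y) + ΔV (br x y) =
      (lTensor g (f x) (ΔE y) - flipT k g g (lTensor g (f x) (ΔE y)))
      + (rTensor g (rhd x) (ΔV y) + lTensor g (rhd x) (ΔV y))
      - (lTensor g (f y) (ΔE x) - flipT k g g (lTensor g (f y) (ΔE x)))
      - (rTensor g (rhd y) (ΔV x) + lTensor g (rhd y) (ΔV x))) ∧
  -- (BE6)
  (∀ x y, ΔE (br x y) =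
      (rTensor V (rhd x) (ΔE y) + lTensor g (br x) (ΔE y))
      + lTensor g (lhd x) (ΔV y) + rTensor V (f x) (δV y)
      - (rTensor V (rhd y) (ΔE x) + lTensor g (br y) (ΔE x))
      - lTensor g (lhd y) (ΔV x) - rTensor V (f y) (δV x)) ∧
  -- (BE7)
  (∀ x y, δV (br x y) =
      (rTensor V (lhd x) (ΔE y) - flipT k V V (rTensor V (lhd x) (ΔE y)))
      + (rTensor V (br x) (δV y) + lTensor V (br x) (δV y))
      - (rTensor V (lhd y) (ΔE x) - flipT k V V (rTensor V (lhd y) (ΔE x)))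
      - (rTensor V (br y) (δV x) + lTensor V (br y) (δV x)))

end
noncomputable section
variable {k g : Type*} [Field k] [CharZero k] [AddCommGroup g] [Module k g]

/-- A flag datum `(α, D, A, B)` of the Lie bialgebra `(g, [·,·], δ_g)`. -/
def IsFlagDatum (gbr : g →ₗ[k] g →ₗ[k] g) (δg : g →ₗ[k] g ⊗[k] g)
    (α : g →ₗ[k] k) (D : g →ₗ[k] g) (A : g) (B : g ⊗[k] g) : Prop :=
  -- B ∈ g ∧ g
  flipT k g g B = - B ∧
  -- (1)
  (∀ a b, α (gbr a b) = 0) ∧ δg A = 0 ∧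
  (∀ a, gbr a A = TensorProduct.rid k g (lTensor g α (δg a))) ∧
  -- (2)
  (∀ a b, D (gbr a b) = gbr (D a) b + gbr a (D b) + α a • D b - α b • D a) ∧
  -- (3)
  (A ⊗ₜ[k] B - swap12 k g g g (A ⊗ₜ[k] B) + asr k g g g (B ⊗ₜ[k] A)
      + lTensor g δg B - swap12 k g g g (lTensor g δg B)
      - asr k g g g (rTensor g δg B) = 0) ∧
  -- (4)
  (∀ a, D a ⊗ₜ[k] A - A ⊗ₜ[k] D a + α a • B + adT gbr a B + δg (D a)
      - rTensor g D (δg a) - lTensor g D (δg a) = 0)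

/-- Equivalence of flag datums: `α = α'`, `A = A'`, and there are `U ∈ g`,
`β ∈ k*` with `D(a) = [U,a] + βD'(a) − α(a)U` and
`B = δ_g(U) + βB' + U⊗A − A⊗U`. -/
def FlagEquiv (gbr : g →ₗ[k] g →ₗ[k] g) (δg : g →ₗ[k] g ⊗[k] g)
    (α : g →ₗ[k] k) (D : g →ₗ[k] g) (A : g) (B : g ⊗[k] g)
    (α' : g →ₗ[k] k) (D' : g →ₗ[k] g) (A' : g) (B' : g ⊗[k] g) : Prop :=
  α = α' ∧ A = A' ∧ ∃ (U : g) (β : k), β ≠ 0 ∧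
    (∀ a, D a = gbr U a + β • D' a - α a • U) ∧
    B = δg U + β • B' + U ⊗ₜ[k] A - A ⊗ₜ[k] U

end
noncomputable section
variable {k g : Type*} [Field k] [CharZero k] [AddCommGroup g] [Module k g]

/-- The set of Lie bialgebra structures on `E = g ⊕ k` (a space containing `g`
with codimension one) containing `(g, [·,·], δ_g)` as a Lie sub-bialgebra. -/
def BStr (k : Type*) [Field k] (g : Type*) [AddCommGroup g] [Module k g]
    (gbr : g →ₗ[k] g →ₗ[k] g) (δg : g →ₗ[k] g ⊗[k] g) :=
  {s : ((g × k) →ₗ[k] (g × k) →ₗ[k] (g × k)) ×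
      ((g × k) →ₗ[k] (g × k) ⊗[k] (g × k)) //
    IsLieBialgebra s.1 s.2 ∧
      (∀ a b : g, s.1 (inl k g k a) (inl k g k b) = inl k g k (gbr a b)) ∧
      (∀ a : g, s.2 (inl k g k a) = map (inl k g k) (inl k g k) (δg a))}

/-- Equivalence of such structures: an isomorphism of Lie bialgebras whose
restriction to `g` is the identity. -/
def BStrRel {gbr : g →ₗ[k] g →ₗ[k] g} {δg : g →ₗ[k] g ⊗[k] g}
    (s t : BStr k g gbr δg) : Prop :=
  ∃ φ : (g × k) ≃ₗ[k] (g × k),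
    (∀ a : g, φ (inl k g k a) = inl k g k a) ∧
    (∀ u v, φ (s.1.1 u v) = t.1.1 (φ u) (φ v)) ∧
    (∀ u, map (φ : (g × k) →ₗ[k] (g × k)) (φ : (g × k) →ₗ[k] (g × k)) (s.1.2 u)
        = t.1.2 (φ u))

/-- Flag datums of the special form `(0, D, 0, B)`. -/
def TFLB (k : Type*) [Field k] (g : Type*) [AddCommGroup g] [Module k g]
    (gbr : g →ₗ[k] g →ₗ[k] g) (δg : g →ₗ[k] g ⊗[k] g) :=
  {s : (g →ₗ[k] g) × (g ⊗[k] g) // IsFlagDatum gbr δg 0 s.1 0 s.2}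

/-- Equivalence on `TFLB`: `D(a) = [U,a] + βD'(a)`, `B = δ_g(U) + βB'`. -/
def TFLBRel {gbr : g →ₗ[k] g →ₗ[k] g} {δg : g →ₗ[k] g ⊗[k] g}
    (s t : TFLB k g gbr δg) : Prop :=
  ∃ (U : g) (β : k), β ≠ 0 ∧ (∀ a, s.1.1 a = gbr U a + β • t.1.1 a) ∧
    s.1.2 = δg U + β • t.1.2

section Aux
set_option linter.unusedSectionVars false

section util
variable {A B C M A' B' C' : Type*} [AddCommGroup A] [Module k A] [AddCommGroup B] [Module k B]
  [AddCommGroup C] [Module k C] [AddCommGroup M] [Module k M]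
  [AddCommGroup A'] [Module k A'] [AddCommGroup B'] [Module k B'] [AddCommGroup C'] [Module k C']

@[simp] lemma flipT_tmul (a : A) (b : B) : flipT k A B (a ⊗ₜ[k] b) = b ⊗ₜ[k] a := rfl

@[simp] lemma swap12_tmul (a : A) (b : B) (c : C) :
    swap12 k A B C (a ⊗ₜ[k] (b ⊗ₜ[k] c)) = b ⊗ₜ[k] (a ⊗ₜ[k] c) := by
  simp [swap12, flipT]

@[simp] lemma asr_tmul (a : A) (b : B) (c : C) :
    asr k A B C ((a ⊗ₜ[k] b) ⊗ₜ[k] c) = a ⊗ₜ[k] (b ⊗ₜ[k] c) := rfl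

lemma ext3R {F G : A ⊗[k] (B ⊗[k] C) →ₗ[k] M}
    (h : ∀ a b c, F (a ⊗ₜ[k] (b ⊗ₜ[k] c)) = G (a ⊗ₜ[k] (b ⊗ₜ[k] c))) : F = G := by
  apply TensorProduct.ext'
  intro a t
  induction t using TensorProduct.induction_on with
  | zero => simp
  | tmul b c => exact h a b c
  | add x y hx hy => rw [tmul_add, map_add, map_add, hx, hy]

lemma flipT_map (f : A →ₗ[k] A') (h : B →ₗ[k] B') (t : A ⊗[k] B) :
    flipT k A' B' (TensorProduct.map f h t) = TensorProduct.map h f (flipT k A B t) := by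
  induction t using TensorProduct.induction_on with
  | zero => simp
  | tmul a b => simp
  | add x y hx hy => simp [map_add, hx, hy]

lemma swap12_map (f : A →ₗ[k] A') (h : B →ₗ[k] B') (j : C →ₗ[k] C') :
    swap12 k A' B' C' ∘ₗ TensorProduct.map f (TensorProduct.map h j)
      = TensorProduct.map h (TensorProduct.map f j) ∘ₗ swap12 k A B C := by
  apply ext3R; intro a b c; simp

lemma asr_map (f : A →ₗ[k] A') (h : B →ₗ[k] B') (j : C →ₗ[k] C') :
    asr k A' B' C' ∘ₗ TensorProduct.map (TensorProduct.map f h) j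
      = TensorProduct.map f (TensorProduct.map h j) ∘ₗ asr k A B C := by
  apply TensorProduct.ext_threefold; intro a b c; simp

lemma rid_map (f : A →ₗ[k] A') (t : A ⊗[k] k) :
    TensorProduct.rid k A' (TensorProduct.map f LinearMap.id t)
      = f (TensorProduct.rid k A t) := by
  induction t using TensorProduct.induction_on with
  | zero => simp
  | tmul a c => simp
  | add x y hx hy => simp [map_add, hx, hy]

lemma flipT_kk (t : k ⊗[k] k) : flipT k k k t = t := by
  have e1 : ∀ u v : k, u ⊗ₜ[k] v = (u*v) ⊗ₜ[k] (1:k) := by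
    intro u v
    conv_lhs => rw [show v = v • (1:k) by simp]
    rw [tmul_smul, smul_tmul', smul_eq_mul, mul_comm]
  induction t using TensorProduct.induction_on with
  | zero => simp
  | tmul x y => rw [flipT_tmul, e1 y x, e1 x y, mul_comm]
  | add x y hx hy => simp [map_add, hx, hy]

lemma br_anti {L : Type*} [AddCommGroup L] [Module k L] {b : L →ₗ[k] L →ₗ[k] L}
    (halt : ∀ a, b a a = 0) (u v : L) : b u v = - b v u := by
  have h := halt (u + v)
  simp only [map_add, LinearMap.add_apply, halt, zero_add, add_zero] at h
  exact eq_neg_of_add_eq_zero_right h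


end util

section Elem

local notation "E" => g × k
local notation "ι" => inl k g k
local notation "ιr" => inr k g k
local notation "π" => fst k g k
local notation "πs" => snd k g k

lemma inl_add_inr (u : E) : ι u.1 + ιr u.2 = u := by
  apply Prod.ext <;> simp

lemma u_eq (u : E) : u = ι u.1 + u.2 • ιr 1 := by
  apply Prod.ext <;> simp

@[simp] lemma mff_ii (t : g ⊗[k] g) :
    TensorProduct.map π π (TensorProduct.map ι ι t) = t := by
  induction t using TensorProduct.induction_on with
  | zero => simp
  | tmul a b => simp
  | add x y hx hy => simp [map_add, hx, hy]

@[simp] lemma mfs_ii (t : g ⊗[k] g) :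
    TensorProduct.map π πs (TensorProduct.map ι ι t) = 0 := by
  induction t using TensorProduct.induction_on with
  | zero => simp
  | tmul a b => simp
  | add x y hx hy => simp [map_add, hx, hy]

@[simp] lemma msf_ii (t : g ⊗[k] g) :
    TensorProduct.map πs π (TensorProduct.map ι ι t) = 0 := by
  induction t using TensorProduct.induction_on with
  | zero => simp
  | tmul a b => simp
  | add x y hx hy => simp [map_add, hx, hy]

@[simp] lemma mss_ii (t : g ⊗[k] g) :
    TensorProduct.map πs πs (TensorProduct.map ι ι t) = 0 := by
  induction t using TensorProduct.induction_on with
  | zero => simp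
  | tmul a b => simp
  | add x y hx hy => simp [map_add, hx, hy]

lemma decomp_T (T : (E) ⊗[k] (E)) :
    TensorProduct.map ι ι (TensorProduct.map π π T)
      + TensorProduct.map ι ιr (TensorProduct.map π πs T)
      + TensorProduct.map ιr ι (TensorProduct.map πs π T)
      + TensorProduct.map ιr ιr (TensorProduct.map πs πs T) = T := by
  induction T using TensorProduct.induction_on with
  | zero => simp
  | tmul u v =>
      conv_rhs => rw [show u ⊗ₜ[k] v
        = (ι u.1 + ιr u.2) ⊗ₜ[k] (ι v.1 + ιr v.2) by rw [inl_add_inr, inl_add_inr]]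
      simp only [add_tmul, tmul_add, map_tmul, fst_apply, snd_apply, inl_apply, inr_apply]
      abel
  | add x y hx hy =>
      simp only [map_add]
      conv_rhs => rw [← hx, ← hy]
      abel

lemma P3_collapse (t : g ⊗[k] (g ⊗[k] g)) :
    TensorProduct.map π (TensorProduct.map π π)
      (TensorProduct.map ι (TensorProduct.map ι ι) t) = t := by
  induction t using TensorProduct.induction_on with
  | zero => simp
  | tmul a s => simp
  | add x y hx hy => simp [map_add, hx, hy]

lemma P3_collapse' (t : (g ⊗[k] g) ⊗[k] g) :
    TensorProduct.map (TensorProduct.map π π) π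
      (TensorProduct.map (TensorProduct.map ι ι) ι t) = t := by
  induction t using TensorProduct.induction_on with
  | zero => simp
  | tmul s a => simp
  | add x y hx hy => simp [map_add, hx, hy]

lemma ridP_zero {P : g ⊗[k] k} (h : TensorProduct.rid k g P = 0) : P = 0 :=
  (LinearEquiv.map_eq_zero_iff _).mp h

lemma neg_self_zero {M : Type*} [AddCommGroup M] [Module k M]
    {c : M} (h : c = -c) : c = 0 := by
  have h2 : (2 : k) • c = 0 := by
    rw [two_smul]
    nth_rewrite 2 [h]
    exact add_neg_cancel c
  have := smul_eq_zero.mp h2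
  rcases this with h'|h'
  · exact absurd h' two_ne_zero
  · exact h'

lemma lT_trans (δE : E →ₗ[k] (E) ⊗[k] (E)) (δg : g →ₗ[k] g ⊗[k] g)
    (hδ : ∀ a : g, δE (ι a) = TensorProduct.map ι ι (δg a)) (t : g ⊗[k] g) :
    lTensor (E) δE (TensorProduct.map ι ι t)
      = TensorProduct.map ι (TensorProduct.map ι ι) (lTensor g δg t) := by
  induction t using TensorProduct.induction_on with
  | zero => simp
  | tmul a b => simp only [map_tmul, lTensor_tmul, hδ]
  | add x y hx hy => simp [map_add, hx, hy]

lemma rT_trans (δE : E →ₗ[k] (E) ⊗[k] (E)) (δg : g →ₗ[k] g ⊗[k] g)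
    (hδ : ∀ a : g, δE (ι a) = TensorProduct.map ι ι (δg a)) (t : g ⊗[k] g) :
    rTensor (E) δE (TensorProduct.map ι ι t)
      = TensorProduct.map (TensorProduct.map ι ι) ι (rTensor g δg t) := by
  induction t using TensorProduct.induction_on with
  | zero => simp
  | tmul a b => simp only [map_tmul, rTensor_tmul, hδ]
  | add x y hx hy => simp [map_add, hx, hy]

lemma adT_trans (brE : E →ₗ[k] (E) →ₗ[k] (E)) (u : E) (φ : g →ₗ[k] g)
    (h : ∀ c : g, brE u (ι c) = ι (φ c)) (t : g ⊗[k] g) :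
    (rTensor (E) (brE u) + lTensor (E) (brE u)) (TensorProduct.map ι ι t)
      = TensorProduct.map ι ι ((rTensor g φ + lTensor g φ) t) := by
  induction t using TensorProduct.induction_on with
  | zero => simp
  | tmul a b =>
      simp only [map_tmul, LinearMap.add_apply, rTensor_tmul, lTensor_tmul, h, map_add]
  | add x y hx hy => simp only [map_add, LinearMap.add_apply, hx, hy]


/-! ### The construction direction: from a flag datum to a bialgebra structure -/

def brE (gbr : g →ₗ[k] g →ₗ[k] g) (D : g →ₗ[k] g) :
    (g × k) →ₗ[k] (g × k) →ₗ[k] (g × k) :=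
  LinearMap.mk₂ k (fun u v => (gbr u.1 v.1 + u.2 • D v.1 - v.2 • D u.1, (0:k)))
    (by intro m₁ m₂ n; simp [Prod.ext_iff, add_smul]; abel)
    (by intro c m n; simp [Prod.ext_iff, smul_add, smul_sub, mul_smul, smul_comm c])
    (by intro m n₁ n₂; simp [Prod.ext_iff, add_smul]; abel)
    (by intro c m n; simp [Prod.ext_iff, smul_add, smul_sub, mul_smul, smul_comm c])

@[simp] lemma brE_apply (gbr : g →ₗ[k] g →ₗ[k] g) (D : g →ₗ[k] g) (u v : E) :
    brE gbr D u v = (gbr u.1 v.1 + u.2 • D v.1 - v.2 • D u.1, (0:k)) := rfl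

lemma brE_u_inl (gbr : g →ₗ[k] g →ₗ[k] g) (D : g →ₗ[k] g) (u : E) (c : g) :
    brE gbr D u (ι c) = ι (gbr u.1 c + u.2 • D c) := by
  apply Prod.ext <;> simp

lemma brE_inl_inl (gbr : g →ₗ[k] g →ₗ[k] g) (D : g →ₗ[k] g) (a b : g) :
    brE gbr D (ι a) (ι b) = ι (gbr a b) := by
  apply Prod.ext <;> simp

def coE (δg : g →ₗ[k] g ⊗[k] g) (B : g ⊗[k] g) :
    (g × k) →ₗ[k] (g × k) ⊗[k] (g × k) :=
  TensorProduct.map ι ι ∘ₗ (δg ∘ₗ π + toSpanSingleton k (g ⊗[k] g) B ∘ₗ πs)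

lemma coE_apply (δg : g →ₗ[k] g ⊗[k] g) (B : g ⊗[k] g) (u : E) :
    coE δg B u = TensorProduct.map ι ι (δg u.1 + u.2 • B) := by
  simp [coE, toSpanSingleton_apply]

lemma coE_inl (δg : g →ₗ[k] g ⊗[k] g) (B : g ⊗[k] g) (a : g) :
    coE δg B (ι a) = TensorProduct.map ι ι (δg a) := by
  simp [coE_apply]

lemma gbr_anti {gbr : g →ₗ[k] g →ₗ[k] g} (halt : ∀ a, gbr a a = 0) (a b : g) :
    gbr a b = - gbr b a := by
  have h := halt (a + b)
  simp only [map_add, LinearMap.add_apply, halt, zero_add, add_zero] at h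
  -- h : gbr a b + gbr b a = 0  (after simp)
  exact eq_neg_of_add_eq_zero_right h

/-- Simplified flag conditions for `(0, D, 0, B)`. -/
lemma fd_deriv {gbr : g →ₗ[k] g →ₗ[k] g} {δg : g →ₗ[k] g ⊗[k] g}
    {D : g →ₗ[k] g} {B : g ⊗[k] g} (h : IsFlagDatum gbr δg 0 D 0 B) :
    ∀ a b, D (gbr a b) = gbr (D a) b + gbr a (D b) := by
  intro a b
  have := h.2.2.2.2.1 a b
  simpa using this

lemma fd_flipB {gbr : g →ₗ[k] g →ₗ[k] g} {δg : g →ₗ[k] g ⊗[k] g}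
    {D : g →ₗ[k] g} {B : g ⊗[k] g} (h : IsFlagDatum gbr δg 0 D 0 B) :
    flipT k g g B = - B := h.1

lemma fd_cond3 {gbr : g →ₗ[k] g →ₗ[k] g} {δg : g →ₗ[k] g ⊗[k] g}
    {D : g →ₗ[k] g} {B : g ⊗[k] g} (h : IsFlagDatum gbr δg 0 D 0 B) :
    lTensor g δg B - swap12 k g g g (lTensor g δg B) = asr k g g g (rTensor g δg B) := by
  have h3 := h.2.2.2.2.2.1
  have key : lTensor g δg B - swap12 k g g g (lTensor g δg B)
      - asr k g g g (rTensor g δg B) = 0 := by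
    rw [← h3]; simp only [zero_tmul, tmul_zero, map_zero]; abel
  have := sub_eq_zero.mp key
  exact this

lemma fd_cond4 {gbr : g →ₗ[k] g →ₗ[k] g} {δg : g →ₗ[k] g ⊗[k] g}
    {D : g →ₗ[k] g} {B : g ⊗[k] g} (h : IsFlagDatum gbr δg 0 D 0 B) :
    ∀ a, δg (D a) = rTensor g D (δg a) + lTensor g D (δg a) - adT gbr a B := by
  intro a
  have h4 := h.2.2.2.2.2.2 a
  have key : δg (D a) - (rTensor g D (δg a) + lTensor g D (δg a) - adT gbr a B) = 0 := by
    rw [← h4]; simp only [zero_tmul, tmul_zero, map_zero, LinearMap.zero_apply, zero_smul]; abel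
  exact sub_eq_zero.mp key

lemma brE_isLie {gbr : g →ₗ[k] g →ₗ[k] g} {D : g →ₗ[k] g} (hg : IsLieBracket gbr)
    (hD : ∀ a b, D (gbr a b) = gbr (D a) b + gbr a (D b)) :
    IsLieBracket (brE gbr D) := by
  constructor
  · intro u; apply Prod.ext <;> simp [hg.1]
  · intro u v w
    apply Prod.ext
    · simp only [brE_apply, Prod.fst_add, Prod.snd_add]
      simp only [map_add, map_sub, map_smul, LinearMap.add_apply, LinearMap.sub_apply, LinearMap.smul_apply,
        smul_add, smul_sub, smul_smul, zero_smul, smul_zero, sub_zero, zero_sub]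
      rw [hg.2 u.1 v.1 w.1, hD v.1 w.1, hD u.1 v.1, hD u.1 w.1]
      rw [gbr_anti hg.1 (D u.1) v.1]
      module
    · simp

lemma phi_compat {gbr : g →ₗ[k] g →ₗ[k] g} {δg : g →ₗ[k] g ⊗[k] g}
    {D : g →ₗ[k] g} {B : g ⊗[k] g}
    (hg : IsLieBialgebra gbr δg) (hfd : IsFlagDatum gbr δg 0 D 0 B) :
    ∀ u v, coE δg B (brE gbr D u v)
      = adT (brE gbr D) u (coE δg B v) - adT (brE gbr D) v (coE δg B u) := by
  intro u v
  have hu : ∀ c : g, brE gbr D u (ι c) = ι ((gbr u.1 + u.2 • D) c) := by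
    intro c; rw [brE_u_inl]; simp
  have hv : ∀ c : g, brE gbr D v (ι c) = ι ((gbr v.1 + v.2 • D) c) := by
    intro c; rw [brE_u_inl]; simp
  rw [coE_apply δg B v, coE_apply δg B u, coE_apply δg B (brE gbr D u v)]
  simp only [adT]
  rw [adT_trans (brE gbr D) u _ hu, adT_trans (brE gbr D) v _ hv, ← LinearMap.map_sub]
  congr 1
  simp only [brE_apply]
  have hcmp := hg.2.2 u.1 v.1
  have h4v := fd_cond4 hfd v.1
  have h4u := fd_cond4 hfd u.1
  simp only [adT, LinearMap.add_apply] at hcmp h4v h4u ⊢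
  simp only [map_add, map_sub, map_smul, rTensor_add, lTensor_add, rTensor_smul,
    lTensor_smul, LinearMap.add_apply, LinearMap.sub_apply, LinearMap.smul_apply, zero_smul, add_zero]
  rw [hcmp, h4v, h4u]
  module

lemma coE_coalg {gbr : g →ₗ[k] g →ₗ[k] g} {δg : g →ₗ[k] g ⊗[k] g}
    {D : g →ₗ[k] g} {B : g ⊗[k] g}
    (hg : IsLieBialgebra gbr δg) (hfd : IsFlagDatum gbr δg 0 D 0 B) :
    IsLieCoalgebra (coE δg B) := by
  constructor
  · intro u
    rw [coE_apply, flipT_map, ← LinearMap.map_neg]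
    congr 1
    rw [map_add, LinearMap.map_smul, hg.2.1.1 u.1, fd_flipB hfd, smul_neg]
    abel
  · intro u
    rw [coE_apply]
    rw [lT_trans (coE δg B) δg (coE_inl δg B), rT_trans (coE δg B) δg (coE_inl δg B)]
    have hsw := LinearMap.congr_fun
      (swap12_map (k := k) (ι : g →ₗ[k] E) ι ι) (lTensor g δg (δg u.1 + u.2 • B))
    have has := LinearMap.congr_fun
      (asr_map (k := k) (ι : g →ₗ[k] E) ι ι) (rTensor g δg (δg u.1 + u.2 • B))
    simp only [LinearMap.comp_apply] at hsw has
    rw [hsw, has]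
    have hcj := hg.2.1.2 u.1
    have hB3 := fd_cond3 hfd
    have key : lTensor g δg (δg u.1 + u.2 • B)
        - swap12 k g g g (lTensor g δg (δg u.1 + u.2 • B))
        = asr k g g g (rTensor g δg (δg u.1 + u.2 • B)) := by
      simp only [map_add, LinearMap.map_smul]
      rw [← hcj, ← hB3]
      module
    rw [← key]
    exact (map_sub (TensorProduct.map (ι : g →ₗ[k] E) (TensorProduct.map ι ι)) _ _).symm

lemma phi_mem {gbr : g →ₗ[k] g →ₗ[k] g} {δg : g →ₗ[k] g ⊗[k] g}
    {D : g →ₗ[k] g} {B : g ⊗[k] g}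
    (hg : IsLieBialgebra gbr δg) (hfd : IsFlagDatum gbr δg 0 D 0 B) :
    IsLieBialgebra (brE gbr D) (coE δg B) ∧
      (∀ a b : g, brE gbr D (ι a) (ι b) = ι (gbr a b)) ∧
      (∀ a : g, coE δg B (ι a) = TensorProduct.map ι ι (δg a)) :=
  ⟨⟨brE_isLie hg.1 (fd_deriv hfd), coE_coalg hg hfd, phi_compat hg hfd⟩,
    brE_inl_inl gbr D, coE_inl δg B⟩

/-! ### The extraction direction -/

lemma proj_gk (f : E →ₗ[k] E) (c : g) (φ : g →ₗ[k] g)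
    (hf1 : ∀ u : E, (f u).1 = φ u.1 - u.2 • c)
    (hf2 : ∀ u : E, (f u).2 = 0) (T : (E) ⊗[k] (E)) :
    TensorProduct.rid k g
        (TensorProduct.map π πs ((rTensor (E) f + lTensor (E) f) T))
      = φ (TensorProduct.rid k g (TensorProduct.map π πs T))
        - (TensorProduct.lid k k (TensorProduct.map πs πs T)) • c := by
  induction T using TensorProduct.induction_on with
  | zero => simp
  | tmul u v =>
      simp only [LinearMap.add_apply, rTensor_tmul, lTensor_tmul, map_add, map_tmul,
        hf1, hf2, sub_tmul, tmul_zero, add_zero, rid_tmul, lid_tmul, map_sub,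
        smul_tmul', smul_sub, fst_apply, snd_apply, LinearMap.map_smul, smul_smul]
      rw [mul_comm]
      abel
  | add x y hx hy =>
      simp only [map_add, add_smul]
      rw [hx, hy]
      abel

lemma proj_gg (f : E →ₗ[k] E) (c : g) (φ : g →ₗ[k] g)
    (hf1 : ∀ u : E, (f u).1 = φ u.1 - u.2 • c)
    (hf2 : ∀ u : E, (f u).2 = 0) (T : (E) ⊗[k] (E)) :
    TensorProduct.map π π ((rTensor (E) f + lTensor (E) f) T)
      = (rTensor g φ + lTensor g φ) (TensorProduct.map π π T)
        - TensorProduct.map (toSpanSingleton k g c) LinearMap.id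
            (TensorProduct.map πs π T)
        - TensorProduct.map LinearMap.id (toSpanSingleton k g c)
            (TensorProduct.map π πs T) := by
  induction T using TensorProduct.induction_on with
  | zero => simp
  | tmul u v =>
      simp only [LinearMap.add_apply, rTensor_tmul, lTensor_tmul, map_add, map_tmul,
        hf1, sub_tmul, tmul_sub, id_coe, id_eq, toSpanSingleton_apply,
        smul_tmul', tmul_smul, fst_apply, snd_apply]
      abel
  | add x y hx hy =>
      simp only [map_add]
      rw [hx, hy]
      abel

def psiD (br : (E) →ₗ[k] (E) →ₗ[k] (E)) : g →ₗ[k] g :=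
  π ∘ₗ (br (ιr 1)) ∘ₗ ι

def psiB (δE : (E) →ₗ[k] (E) ⊗[k] (E)) : g ⊗[k] g :=
  TensorProduct.map π π (δE (ιr 1))

@[simp] lemma psiD_apply (br : (E) →ₗ[k] (E) →ₗ[k] (E)) (c : g) :
    psiD br c = (br (ιr 1) (ι c)).1 := rfl

lemma map_phi_ii {φ : (E) →ₗ[k] (E)} (hφ : ∀ a : g, φ (ι a) = ι a)
    (X : g ⊗[k] g) :
    TensorProduct.map φ φ (TensorProduct.map ι ι X) = TensorProduct.map ι ι X := by
  induction X using TensorProduct.induction_on with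
  | zero => simp
  | tmul a b => simp only [map_tmul, hφ]
  | add x y hx hy => simp [map_add, hx, hy]

lemma psi_main {gbr : g →ₗ[k] g →ₗ[k] g} {δg : g →ₗ[k] g ⊗[k] g}
    (hperfect : Submodule.span k {c : g | ∃ a b, gbr a b = c} = ⊤)
    (hcenter : ∀ c : g, (∀ a, gbr a c = 0) → c = 0)
    (br : (E) →ₗ[k] (E) →ₗ[k] (E)) (δE : (E) →ₗ[k] (E) ⊗[k] (E))
    (hbia : IsLieBialgebra br δE)
    (hbr : ∀ a b : g, br (ι a) (ι b) = ι (gbr a b))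
    (hδ : ∀ a : g, δE (ι a) = TensorProduct.map ι ι (δg a)) :
    IsFlagDatum gbr δg 0 (psiD br) 0 (psiB δE) ∧
      br = brE gbr (psiD br) ∧ δE = coE δg (psiB δE) := by
  obtain ⟨hLB, hcoal, hcompat⟩ := hbia
  have halt := hLB.1
  -- bracket bilinear expansion
  have hw : ∀ u v : E, br u v
      = ι (gbr u.1 v.1) + u.2 • br (ιr 1) (ι v.1) - v.2 • br (ιr 1) (ι u.1) := by
    intro u v
    conv_lhs => rw [u_eq u, u_eq v]
    simp only [map_add, map_smul, LinearMap.add_apply, LinearMap.smul_apply, hbr, halt, smul_zero]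
    rw [br_anti halt (ι u.1) (ιr 1)]
    module
  -- alpha vanishes on brackets
  have halpha : ∀ c : g, (br (ιr 1) (ι c)).2 = 0 := by
    have hab : ∀ a b : g, (br (ιr 1) (ι (gbr a b))).2 = 0 := by
      intro a b
      have hJ := hLB.2 (ιr 1) (ι a) (ι b)
      rw [hbr a b, hw (br (ιr 1) (ι a)) (ι b), hw (ι a) (br (ιr 1) (ι b))] at hJ
      have h2 := congrArg Prod.snd hJ
      simp only [Prod.snd_add, Prod.snd_sub, Prod.smul_snd, inl_apply, fst_apply,
        snd_apply, smul_eq_mul, mul_zero, zero_mul, sub_zero, zero_add, add_zero,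
        smul_zero, zero_smul] at h2
      exact h2.trans (by ring)
    intro c
    have hc : c ∈ Submodule.span k {c : g | ∃ a b, gbr a b = c} := by
      rw [hperfect]; trivial
    induction hc using Submodule.span_induction with
    | mem x h => obtain ⟨a, b, rfl⟩ := h; exact hab a b
    | zero => simp only [map_zero, Prod.snd_zero]
    | add x y hx hy ihx ihy => simp only [map_add, Prod.snd_add, ihx, ihy, add_zero]
    | smul a x hx ih => simp only [map_smul, Prod.smul_snd, ih, smul_zero]
  have hwD : ∀ c : g, br (ιr 1) (ι c) = ι (psiD br c) := by
    intro c
    apply Prod.ext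
    · simp [psiD]
    · simpa using halpha c
  -- derivation property
  have hDer : ∀ a b, psiD br (gbr a b) = gbr (psiD br a) b + gbr a (psiD br b) := by
    intro a b
    have hJ := hLB.2 (ιr 1) (ι a) (ι b)
    rw [hbr a b, hwD (gbr a b), hwD a, hwD b, hbr (psiD br a) b, hbr a (psiD br b)] at hJ
    have h1 := congrArg Prod.fst hJ
    simpa using h1
  -- the bracket is brE
  have hbrE : br = brE gbr (psiD br) := by
    apply LinearMap.ext; intro u; apply LinearMap.ext; intro v
    rw [hw u v, hwD, hwD]
    apply Prod.ext <;> simp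
  -- coproduct expansion
  have hδu : ∀ u : E, δE u = TensorProduct.map ι ι (δg u.1) + u.2 • δE (ιr 1) := by
    intro u
    conv_lhs => rw [u_eq u]
    simp only [map_add, map_smul, hδ]
  have hTanti : flipT k (E) (E) (δE (ιr 1)) = - δE (ιr 1) := hcoal.1 (ιr 1)
  have hss : TensorProduct.map πs πs (δE (ιr 1)) = 0 := by
    have h1 : flipT k k k (TensorProduct.map πs πs (δE (ιr 1)))
        = TensorProduct.map πs πs (flipT k (E) (E) (δE (ιr 1))) :=
      flipT_map πs πs (δE (ιr 1))
    rw [hTanti] at h1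
    rw [show TensorProduct.map πs πs (-(δE (ιr 1)))
        = -(TensorProduct.map πs πs (δE (ιr 1))) from map_neg _ _] at h1
    rw [flipT_kk] at h1
    exact neg_self_zero (k := k) h1
  -- the bracket by a fixed inl element
  have hfst : ∀ (a : g) (u : E), (br (ι a) u).1 = gbr a u.1 - u.2 • psiD br a := by
    intro a u
    rw [hw (ι a) u, hwD]
    simp
  have hsnd : ∀ (a : g) (u : E), (br (ι a) u).2 = 0 := by
    intro a u
    have h := halpha a
    simp only [inl_apply, inr_apply] at h
    rw [hw (ι a) u]
    simp [h]
  -- the compatibility equation at (inl a, e)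
  have hC : ∀ a : g, - TensorProduct.map ι ι (δg (psiD br a))
      = (rTensor (E) (br (ι a)) + lTensor (E) (br (ι a))) (δE (ιr 1))
        - TensorProduct.map ι ι
            ((rTensor g (psiD br) + lTensor g (psiD br)) (δg a)) := by
    intro a
    have h0 := hcompat (ι a) (ιr 1)
    have hLHS : br (ι a) (ιr 1) = - ι (psiD br a) := by
      rw [br_anti halt, hwD]
    rw [hLHS, map_neg, hδ (psiD br a), hδ a] at h0
    simp only [adT] at h0
    rw [adT_trans br (ιr 1) (psiD br) hwD] at h0
    exact h0
  -- the g⊗k component of δE e vanishes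
  have hA0 : TensorProduct.map π πs (δE (ιr 1)) = 0 := by
    apply ridP_zero
    apply hcenter
    intro a
    have hP := congrArg
      (fun X => TensorProduct.rid k g (TensorProduct.map π πs X)) (hC a)
    simp only [map_neg, map_sub, mfs_ii, map_zero, neg_zero, sub_zero] at hP
    rw [proj_gk (br (ι a)) (psiD br a) (gbr a) (hfst a) (hsnd a), hss] at hP
    simp only [map_zero, zero_smul, sub_zero] at hP
    exact hP.symm
  have hsf : TensorProduct.map πs π (δE (ιr 1)) = 0 := by
    have h2 := flipT_map π πs (δE (ιr 1))
    rw [hA0, hTanti] at h2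
    rw [show TensorProduct.map πs π (-(δE (ιr 1)))
        = -(TensorProduct.map πs π (δE (ιr 1))) from map_neg _ _] at h2
    rw [show (flipT k g k) (0 : g ⊗[k] k) = 0 from map_zero _] at h2
    exact neg_eq_zero.mp h2.symm
  -- δE e lands in g⊗g
  have hTB : δE (ιr 1) = TensorProduct.map ι ι (psiB δE) := by
    conv_lhs => rw [← decomp_T (δE (ιr 1))]
    rw [hA0, hsf, hss]
    simp [psiB]
  have hflipB : flipT k g g (psiB δE) = - psiB δE := by
    unfold psiB
    rw [flipT_map, hTanti, map_neg]
  -- flag condition (4)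
  have hc4 : ∀ a, - δg (psiD br a)
      = (rTensor g (gbr a) + lTensor g (gbr a)) (psiB δE)
        - (rTensor g (psiD br) + lTensor g (psiD br)) (δg a) := by
    intro a
    have hP := congrArg (TensorProduct.map π π) (hC a)
    simp only [map_neg, map_sub, mff_ii] at hP
    rw [proj_gg (br (ι a)) (psiD br a) (gbr a) (hfst a) (hsnd a), hA0, hsf] at hP
    simp only [map_zero, sub_zero] at hP
    exact hP
  -- flag condition (3)
  have hc3 : lTensor g δg (psiB δE) - swap12 k g g g (lTensor g δg (psiB δE))
      = asr k g g g (rTensor g δg (psiB δE)) := by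
    have hCJ := hcoal.2 (ιr 1)
    rw [hTB] at hCJ
    rw [lT_trans δE δg hδ, rT_trans δE δg hδ] at hCJ
    have hsw := LinearMap.congr_fun
      (swap12_map (k := k) (ι : g →ₗ[k] E) ι ι) (lTensor g δg (psiB δE))
    have has := LinearMap.congr_fun
      (asr_map (k := k) (ι : g →ₗ[k] E) ι ι) (rTensor g δg (psiB δE))
    simp only [LinearMap.comp_apply] at hsw has
    rw [hsw, has] at hCJ
    have hP := congrArg (TensorProduct.map π (TensorProduct.map π π)) hCJ
    simp only [map_sub, P3_collapse] at hP
    exact hP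
  -- δE is coE
  have hcoE : δE = coE δg (psiB δE) := by
    apply LinearMap.ext; intro u
    rw [hδu u, hTB, coE_apply, map_add, LinearMap.map_smul]
  refine ⟨⟨hflipB, ?_, ?_, ?_, ?_, ?_, ?_⟩, hbrE, hcoE⟩
  · intro a b; simp
  · simp
  · intro a; simp [lTensor_zero]
  · intro a b
    simp only [LinearMap.zero_apply, zero_smul, add_zero, sub_zero]
    exact hDer a b
  · simp only [zero_tmul, tmul_zero, map_zero, neg_zero, zero_add, sub_zero, add_zero]
    exact sub_eq_zero.mpr hc3
  · intro a
    have h' : δg ((psiD br) a)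
        = (rTensor g (psiD br) + lTensor g (psiD br)) (δg a)
          - (rTensor g (gbr a) + lTensor g (gbr a)) (psiB δE) := by
      have h2 := congrArg Neg.neg (hc4 a)
      rw [neg_neg, neg_sub] at h2
      exact h2
    simp only [tmul_zero, zero_tmul, LinearMap.zero_apply, zero_smul, zero_add,
      sub_zero, add_zero, adT]
    rw [h']
    simp only [LinearMap.add_apply, LinearMap.sub_apply]
    abel

lemma psiD_brE (gbr : g →ₗ[k] g →ₗ[k] g) (D : g →ₗ[k] g) :
    psiD (brE gbr D) = D := by
  apply LinearMap.ext; intro c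
  simp [psiD]

lemma psiB_coE (δg : g →ₗ[k] g ⊗[k] g) (B : g ⊗[k] g) :
    psiB (coE δg B) = B := by
  unfold psiB
  rw [coE_apply]
  simp

/-! ### Final assembly -/

lemma brE_e_inl (gbr : g →ₗ[k] g →ₗ[k] g) (D : g →ₗ[k] g) (a : g) :
    brE gbr D (ιr 1) (ι a) = ι (D a) := by
  apply Prod.ext <;> simp

lemma coE_e (δg : g →ₗ[k] g ⊗[k] g) (B : g ⊗[k] g) :
    coE δg B (ιr 1) = TensorProduct.map ι ι B := by
  rw [coE_apply]; simp

lemma final_equiv {gbr : g →ₗ[k] g →ₗ[k] g} {δg : g →ₗ[k] g ⊗[k] g}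
    (hg : IsLieBialgebra gbr δg)
    (hperfect : Submodule.span k {c : g | ∃ a b, gbr a b = c} = ⊤)
    (hcenter : ∀ c : g, (∀ a, gbr a c = 0) → c = 0) :
    Nonempty (Quot (BStrRel (gbr := gbr) (δg := δg)) ≃
      Quot (TFLBRel (gbr := gbr) (δg := δg))) := by
  have key : ∀ s : BStr k g gbr δg,
      IsFlagDatum gbr δg 0 (psiD s.1.1) 0 (psiB s.1.2) ∧
        s.1.1 = brE gbr (psiD s.1.1) ∧ s.1.2 = coE δg (psiB s.1.2) :=
    fun s => psi_main hperfect hcenter s.1.1 s.1.2 s.2.1 s.2.2.1 s.2.2.2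
  refine ⟨Quot.congr
    (⟨fun s => ⟨(psiD s.1.1, psiB s.1.2), (key s).1⟩,
      fun d => ⟨(brE gbr d.1.1, coE δg d.1.2), phi_mem hg d.2⟩,
      fun s => ?_, fun d => ?_⟩ : BStr k g gbr δg ≃ TFLB k g gbr δg) ?_⟩
  · apply Subtype.ext
    show (brE gbr (psiD s.1.1), coE δg (psiB s.1.2)) = s.1
    rw [← (key s).2.1, ← (key s).2.2]
  · apply Subtype.ext
    show (psiD (brE gbr d.1.1), psiB (coE δg d.1.2)) = d.1
    rw [psiD_brE, psiB_coE]
  · intro s t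
    show BStrRel s t ↔ TFLBRel ⟨(psiD s.1.1, psiB s.1.2), (key s).1⟩
      ⟨(psiD t.1.1, psiB t.1.2), (key t).1⟩
    constructor
    · rintro ⟨φ, hφg, hφbr, hφδ⟩
      refine ⟨(φ (ιr 1)).1, (φ (ιr 1)).2, ?_, ?_, ?_⟩
      · -- β ≠ 0
        intro hβ0
        obtain ⟨u, hu⟩ := φ.surjective (ιr 1)
        have hxu : φ u = ι u.1 + u.2 • φ (ιr 1) := by
          conv_lhs => rw [u_eq u]
          rw [map_add, map_smul, hφg]
        rw [hxu] at hu
        have h2 := congrArg Prod.snd hu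
        simp only [inr_apply] at hβ0
        simp only [Prod.snd_add, Prod.smul_snd, smul_eq_mul, inl_apply, inr_apply,
          hβ0, mul_zero, add_zero, zero_add] at h2
        exact one_ne_zero h2.symm
      · -- D relation
        intro a
        have h := hφbr (ιr 1) (ι a)
        rw [hφg a, (key s).2.1, (key t).2.1, brE_e_inl, hφg, brE_u_inl] at h
        have h1 := congrArg Prod.fst h
        simpa using h1
      · -- B relation
        have h := hφδ (ιr 1)
        rw [(key s).2.2, (key t).2.2, coE_e, coE_apply] at h
        rw [map_phi_ii hφg] at h
        have h1 := congrArg (TensorProduct.map π π) h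
        simpa using h1
    · rintro ⟨U, β, hβ, hD0, hB0⟩
      have hD : ∀ a, psiD s.1.1 a = gbr U a + β • psiD t.1.1 a := hD0
      have hB : psiB s.1.2 = δg U + β • psiB t.1.2 := hB0
      clear hD0 hB0
      have halt := hg.1.1
      -- the isomorphism
      set φl : (E) →ₗ[k] (E) :=
        ι ∘ₗ π + (ι ∘ₗ toSpanSingleton k g U) ∘ₗ πs + β • ((ιr : k →ₗ[k] E) ∘ₗ πs) with hφl
      have hφl_apply : ∀ u : E, φl u = (u.1 + u.2 • U, β * u.2) := by
        intro u
        apply Prod.ext <;>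
          simp [hφl, toSpanSingleton_apply, mul_comm]
      set φi : (E) →ₗ[k] (E) :=
        ι ∘ₗ π - (ι ∘ₗ toSpanSingleton k g (β⁻¹ • U)) ∘ₗ πs
          + β⁻¹ • ((ιr : k →ₗ[k] E) ∘ₗ πs) with hφi
      have hφi_apply : ∀ u : E, φi u = (u.1 - u.2 • β⁻¹ • U, β⁻¹ * u.2) := by
        intro u
        apply Prod.ext <;>
          simp [hφi, toSpanSingleton_apply, mul_comm, smul_smul]
      have hli : φl ∘ₗ φi = LinearMap.id := by
        apply LinearMap.ext; intro u
        rw [comp_apply, hφi_apply, hφl_apply, id_apply]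
        apply Prod.ext
        · show u.1 - u.2 • β⁻¹ • U + (β⁻¹ * u.2) • U = u.1
          rw [smul_smul, mul_comm u.2 β⁻¹]
          abel
        · show β * (β⁻¹ * u.2) = u.2
          field_simp
      have hil : φi ∘ₗ φl = LinearMap.id := by
        apply LinearMap.ext; intro u
        rw [comp_apply, hφl_apply, hφi_apply, id_apply]
        apply Prod.ext
        · show u.1 + u.2 • U - (β * u.2) • β⁻¹ • U = u.1
          rw [smul_smul, show β * u.2 * β⁻¹ = u.2 from by field_simp]
          abel
        · show β⁻¹ * (β * u.2) = u.2
          field_simp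
      refine ⟨LinearEquiv.ofLinear φl φi hli hil, ?_, ?_, ?_⟩
      · intro a
        rw [LinearEquiv.ofLinear_apply, hφl_apply]
        apply Prod.ext <;> simp
      · intro u v
        simp only [LinearEquiv.ofLinear_apply]
        rw [(key s).2.1, (key t).2.1]
        rw [hφl_apply, hφl_apply, hφl_apply]
        apply Prod.ext
        · simp only [brE_apply]
          simp only [map_add, map_smul, LinearMap.add_apply, LinearMap.smul_apply, zero_smul, add_zero,
            smul_add, smul_smul, smul_zero, zero_add]
          rw [hD v.1, hD u.1]
          rw [gbr_anti halt u.1 U]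
          simp only [halt U, smul_zero, smul_neg, add_zero]
          module
        · simp [brE_apply]
      · intro u
        simp only [LinearEquiv.ofLinear_apply]
        rw [(key s).2.2, (key t).2.2, coE_apply, coE_apply]
        have hφg' : ∀ a : g, φl (ι a) = ι a := by
          intro a; rw [hφl_apply]; apply Prod.ext <;> simp
        rw [show (LinearEquiv.ofLinear φl φi hli hil : (E) →ₗ[k] (E)) = φl from rfl]
        rw [map_phi_ii hφg']
        congr 1
        rw [hφl_apply]
        simp only [map_add]
        rw [hB]
        simp only [map_add, LinearMap.map_smul]
        module

end Elem
end Aux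

/-- **Corollary.** If `[g,g] = g` and `Z(g) = 0`, then every flag datum has the
form `(0, D, 0, B)` with `D` a derivation, and
`BExtd(E, g) ≅ TFLB(g, δ_g)/≡` for `E` of codimension one over `g`. -/
theorem bextd_eq_tflb (gbr : g →ₗ[k] g →ₗ[k] g) (δg : g →ₗ[k] g ⊗[k] g)
    (hg : IsLieBialgebra gbr δg)
    (hperfect : Submodule.span k {c : g | ∃ a b, gbr a b = c} = ⊤)
    (hcenter : ∀ c : g, (∀ a, gbr a c = 0) → c = 0) :
    (∀ (α : g →ₗ[k] k) (D : g →ₗ[k] g) (A : g) (B : g ⊗[k] g),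
      IsFlagDatum gbr δg α D A B →
        α = 0 ∧ A = 0 ∧ ∀ a b, D (gbr a b) = gbr (D a) b + gbr a (D b)) ∧
    Nonempty (Quot (BStrRel (gbr := gbr) (δg := δg)) ≃
      Quot (TFLBRel (gbr := gbr) (δg := δg))) := by
  refine ⟨?_, final_equiv hg hperfect hcenter⟩
  intro α D A B hfd
  have hα : α = 0 := by
    apply LinearMap.ext; intro a
    have hc : a ∈ Submodule.span k {c : g | ∃ x y, gbr x y = c} := by
      rw [hperfect]; trivial
    induction hc using Submodule.span_induction with
    | mem x h => obtain ⟨p, q, rfl⟩ := h; exact hfd.2.1 p q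
    | zero => simp
    | add x y hx hy ihx ihy => simp [map_add, ihx, ihy]
    | smul c x hx ih => simp [map_smul, ih]
  have hA : A = 0 := by
    apply hcenter
    intro a
    have h4 := hfd.2.2.2.1 a
    rw [hα] at h4
    simpa using h4
  refine ⟨hα, hA, ?_⟩
  intro a b
  have h := hfd.2.2.2.2.1 a b
  rw [hα] at h
  simpa using h

end
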